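/- For n ≥ 2, s ≥ 0 and any positive reals v_1, …, v_n: P( ( ⋃_τ E_τ(s) ) ∩ { R_i(s) ≤ v_i for all i = 1, …, n } ) = e^{- s · Σ_{1 ≤ i < j ≤ n} x_i x_j } · ∏_{i=1}^{n} ( 1 − e^{- x_i v_i} ), the union being over all permutations τ of {1, …, n}. That is, conditionally on the event { S > s } = ⋃_τ E_τ(s), the residuals R_1(s), …, R_n(s) are independent exponential random variables with respective rates x_1, …, x_n. -/

import Mathlib

open MeasureTheory ProbabilityTheory Real

/-- The event `E_τ(s)`: for every consecutive pair of positions `j, j+1` (0-indexed),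
`ξ_{τ(j+1)} > ξ_{τ(j)} + s · x_{τ(j)}`. -/
def gapEvent {Ω : Type*} (n : ℕ) (x : Fin n → ℝ) (ξ : Fin n → Ω → ℝ) (s : ℝ)
    (τ : Equiv.Perm (Fin n)) : Set Ω :=
  {ω | ∀ j : ℕ, ∀ hj : j + 1 < n,
    ξ (τ ⟨j + 1, hj⟩) ω > ξ (τ ⟨j, Nat.lt_of_succ_lt hj⟩) ω
      + s * x (τ ⟨j, Nat.lt_of_succ_lt hj⟩)}

/-- `Σ_{1 ≤ i < j ≤ n} x_i x_j`. -/
def pairSum (n : ℕ) (x : Fin n → ℝ) : ℝ :=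
  ∑ i : Fin n, ∑ j ∈ Finset.Ioi i, x i * x j

/-- The residual `R_i(s) = ξ_i − s · Σ_{j ≠ i} x_j · 1{ξ_j < ξ_i}`. -/
noncomputable def residualVar {Ω : Type*} (n : ℕ) (x : Fin n → ℝ) (ξ : Fin n → Ω → ℝ)
    (s : ℝ) (i : Fin n) (ω : Ω) : ℝ :=
  ξ i ω - s * ∑ j ∈ Finset.univ.erase i, x j * (if ξ j ω < ξ i ω then 1 else 0)

def pairSum' (n : ℕ) (x : Fin n → ℝ) : ℝ :=
  ∑ i : Fin n, ∑ j ∈ Finset.Ioi i, x i * x j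

namespace ResidualsAux

open Finset
open scoped ENNReal NNReal

variable {n : ℕ}

/-- The sorted-gap set in path space. -/
def gapSet (n : ℕ) (x : Fin n → ℝ) (s : ℝ) (τ : Equiv.Perm (Fin n)) : Set (Fin n → ℝ) :=
  {y | ∀ j : ℕ, ∀ hj : j + 1 < n,
    y (τ ⟨j + 1, hj⟩) > y (τ ⟨j, Nat.lt_of_succ_lt hj⟩)
      + s * x (τ ⟨j, Nat.lt_of_succ_lt hj⟩)}

noncomputable def resVal (n : ℕ) (x : Fin n → ℝ) (s : ℝ) (y : Fin n → ℝ) (i : Fin n) : ℝ :=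
  y i - s * ∑ j ∈ Finset.univ.erase i, x j * (if y j < y i then 1 else 0)

def resSet (n : ℕ) (x : Fin n → ℝ) (s : ℝ) (v : Fin n → ℝ) : Set (Fin n → ℝ) :=
  {y | ∀ i, resVal n x s y i ≤ v i}

def ASet (n : ℕ) (x : Fin n → ℝ) (s : ℝ) (v : Fin n → ℝ) (τ : Equiv.Perm (Fin n)) :
    Set (Fin n → ℝ) := gapSet n x s τ ∩ resSet n x s v

def BSet (n : ℕ) (v : Fin n → ℝ) (τ : Equiv.Perm (Fin n)) : Set (Fin n → ℝ) :=
  {u | StrictMono (u ∘ τ)} ∩ {u | ∀ i, u i ≤ v i}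

/-- The shift vector. -/
noncomputable def shiftVec (n : ℕ) (x : Fin n → ℝ) (s : ℝ) (τ : Equiv.Perm (Fin n))
    (i : Fin n) : ℝ :=
  s * ∑ k : Fin n, if (k : ℕ) < (τ.symm i : ℕ) then x (τ k) else 0

lemma shiftVec_apply (x : Fin n → ℝ) (s : ℝ) (τ : Equiv.Perm (Fin n)) (m : Fin n) :
    shiftVec n x s τ (τ m) = s * ∑ k : Fin n, if (k : ℕ) < (m : ℕ) then x (τ k) else 0 := by
  simp [shiftVec]

lemma shiftVec_zero (x : Fin n → ℝ) (s : ℝ) (τ : Equiv.Perm (Fin n)) (h0 : 0 < n) :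
    shiftVec n x s τ (τ ⟨0, h0⟩) = 0 := by
  rw [shiftVec_apply]
  simp

lemma shiftVec_nonneg (x : Fin n → ℝ) (hx : ∀ i, 0 < x i) {s : ℝ} (hs : 0 ≤ s)
    (τ : Equiv.Perm (Fin n)) (i : Fin n) : 0 ≤ shiftVec n x s τ i := by
  refine mul_nonneg hs (Finset.sum_nonneg fun k _ => ?_)
  split
  · exact (hx _).le
  · exact le_rfl

lemma shiftVec_succ (x : Fin n → ℝ) (s : ℝ) (τ : Equiv.Perm (Fin n)) {j : ℕ}
    (hj : j + 1 < n) :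
    shiftVec n x s τ (τ ⟨j + 1, hj⟩)
      = shiftVec n x s τ (τ ⟨j, Nat.lt_of_succ_lt hj⟩)
        + s * x (τ ⟨j, Nat.lt_of_succ_lt hj⟩) := by
  rw [shiftVec_apply, shiftVec_apply]
  have key : ∀ k : Fin n, (if (k : ℕ) < j + 1 then x (τ k) else 0)
      = (if (k : ℕ) < j then x (τ k) else 0)
        + (if k = ⟨j, Nat.lt_of_succ_lt hj⟩ then x (τ k) else 0) := by
    intro k
    by_cases h1 : (k : ℕ) < j
    · have : k ≠ ⟨j, Nat.lt_of_succ_lt hj⟩ := by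
        intro h; subst h; simp at h1
      simp [h1, this, Nat.lt_of_lt_of_le h1 (Nat.le_succ j)]
    · by_cases h2 : (k : ℕ) = j
      · have : k = ⟨j, Nat.lt_of_succ_lt hj⟩ := Fin.ext h2
        simp [this, h1]
      · have h3 : ¬ (k : ℕ) < j + 1 := by omega
        have : k ≠ ⟨j, Nat.lt_of_succ_lt hj⟩ := by
          intro h; subst h; simp at h2
        simp [h1, h3, this]
  rw [Finset.sum_congr rfl (fun k _ => key k), Finset.sum_add_distrib,
    Finset.sum_ite_eq' Finset.univ (⟨j, Nat.lt_of_succ_lt hj⟩ : Fin n) (fun k => x (τ k))]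
  simp [mul_add]


lemma strictMono_iff_consec (f : Fin n → ℝ) :
    StrictMono f ↔ ∀ j : ℕ, ∀ hj : j + 1 < n, f ⟨j, Nat.lt_of_succ_lt hj⟩ < f ⟨j + 1, hj⟩ := by
  constructor
  · intro h j hj
    exact h (by simp [Fin.lt_def])
  · intro h
    match n, f, h with
    | 0, f, h => exact fun a => a.elim0
    | (m + 1), f, h =>
      rw [Fin.strictMono_iff_lt_succ]
      intro i
      obtain ⟨j, hj⟩ := i
      have := h j (by omega)
      rw [Fin.castSucc_mk, Fin.succ_mk]
      exact this

lemma gapSet_strictMono {x : Fin n → ℝ} (hx : ∀ i, 0 < x i) {s : ℝ} (hs : 0 ≤ s)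
    {τ : Equiv.Perm (Fin n)} {y : Fin n → ℝ} (hy : y ∈ gapSet n x s τ) :
    StrictMono (y ∘ τ) := by
  rw [strictMono_iff_consec]
  intro j hj
  have h1 := hy j hj
  have h2 : 0 ≤ s * x (τ ⟨j, Nat.lt_of_succ_lt hj⟩) := mul_nonneg hs (hx _).le
  simp only [Function.comp_apply]
  linarith

lemma perm_eq_of_strictMono {y : Fin n → ℝ} {τ σ : Equiv.Perm (Fin n)}
    (h1 : StrictMono (y ∘ τ)) (h2 : StrictMono (y ∘ σ)) : τ = σ := by
  have hr : Set.range (y ∘ ⇑τ) = Set.range (y ∘ ⇑σ) := by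
    rw [Set.range_comp, Set.range_comp, Equiv.range_eq_univ, Equiv.range_eq_univ]
  haveI : WellFoundedLT (Fin n) := inferInstance
  have heq : y ∘ ⇑τ = y ∘ ⇑σ := (h1.range_inj h2).mp hr
  have hyinj : Function.Injective y := by
    intro a b hab
    obtain ⟨a', rfl⟩ := τ.surjective a
    obtain ⟨b', rfl⟩ := τ.surjective b
    exact congrArg τ (h1.injective hab)
  exact Equiv.ext fun a => hyinj (congrFun heq a)

lemma exists_sort_perm {u : Fin n → ℝ} (hinj : Function.Injective u) :
    ∃ τ : Equiv.Perm (Fin n), StrictMono (u ∘ τ) :=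
  ⟨Tuple.sort u, (Tuple.monotone_sort u).strictMono_of_injective
    (hinj.comp (Tuple.sort u).injective)⟩

/-- The residual of the shifted vector is the original vector. -/
lemma resVal_shift (x : Fin n → ℝ) (s : ℝ) (τ : Equiv.Perm (Fin n)) (u : Fin n → ℝ)
    (hy : StrictMono ((fun i => u i + shiftVec n x s τ i) ∘ τ)) (i : Fin n) :
    resVal n x s (fun i => u i + shiftVec n x s τ i) i = u i := by
  set y : Fin n → ℝ := fun i => u i + shiftVec n x s τ i with hydef
  have hsum : ∑ j ∈ Finset.univ.erase i, x j * (if y j < y i then 1 else 0)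
      = ∑ k : Fin n, if (k : ℕ) < (τ.symm i : ℕ) then x (τ k) else 0 := by
    rw [Finset.sum_erase _ (by simp)]
    rw [← Equiv.sum_comp τ (fun j => x j * (if y j < y i then 1 else 0))]
    refine Finset.sum_congr rfl fun k _ => ?_
    have hlt : y (τ k) < y i ↔ (k : ℕ) < (τ.symm i : ℕ) := by
      conv_lhs => rw [show i = τ (τ.symm i) from (Equiv.apply_symm_apply τ i).symm]
      rw [show y (τ k) < y (τ (τ.symm i)) ↔ k < τ.symm i from hy.lt_iff_lt]
      exact Fin.lt_def
    by_cases h : (k : ℕ) < (τ.symm i : ℕ) <;> simp [hlt, h]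
  rw [resVal, hsum]
  have : y i = u i + shiftVec n x s τ i := rfl
  rw [this, shiftVec]
  ring


/-- Sum over ordered pairs. -/
noncomputable def pairT (n : ℕ) (f : Fin n → ℝ) : ℝ :=
  ∑ m : Fin n, ∑ k : Fin n, if k < m then f k * f m else 0

lemma pairT_identity (f : Fin n → ℝ) :
    pairT n f + pairT n f + ∑ i : Fin n, f i * f i = (∑ i : Fin n, f i) * (∑ i : Fin n, f i) := by
  have key : ∀ m k : Fin n,
      (if k < m then f k * f m else 0) + (if m < k then f k * f m else 0)
        + (if k = m then f k * f m else 0) = f k * f m := by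
    intro m k
    rcases lt_trichotomy k m with h | h | h
    · simp [h, asymm h, ne_of_lt h]
    · simp [h, lt_irrefl]
    · simp [h, asymm h, (ne_of_lt h).symm]
  have h2 : ∑ m : Fin n, ∑ k : Fin n, (if m < k then f k * f m else 0) = pairT n f := by
    rw [Finset.sum_comm]
    unfold pairT
    refine Finset.sum_congr rfl fun a _ => Finset.sum_congr rfl fun b _ => ?_
    rw [mul_comm]
  have h3 : ∑ m : Fin n, ∑ k : Fin n, (if k = m then f k * f m else 0)
      = ∑ i : Fin n, f i * f i := by
    refine Finset.sum_congr rfl fun m _ => ?_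
    rw [Finset.sum_ite_eq' Finset.univ m (fun k => f k * f m)]
    simp
  have h4 : (∑ i : Fin n, f i) * (∑ i : Fin n, f i)
      = ∑ m : Fin n, ∑ k : Fin n, f k * f m := by
    rw [Finset.sum_mul_sum]
    rw [Finset.sum_comm]
  have main : pairT n f + (∑ m : Fin n, ∑ k : Fin n, (if m < k then f k * f m else 0))
      + (∑ m : Fin n, ∑ k : Fin n, (if k = m then f k * f m else 0))
      = ∑ m : Fin n, ∑ k : Fin n, f k * f m := by
    unfold pairT
    rw [← Finset.sum_add_distrib, ← Finset.sum_add_distrib]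
    refine Finset.sum_congr rfl fun m _ => ?_
    rw [← Finset.sum_add_distrib, ← Finset.sum_add_distrib]
    exact Finset.sum_congr rfl fun k _ => key m k
  rw [h4, ← main, h2, h3]

lemma pairT_comp_perm (x : Fin n → ℝ) (τ : Equiv.Perm (Fin n)) :
    pairT n (fun k => x (τ k)) = pairT n x := by
  have i1 := pairT_identity (n := n) (fun k => x (τ k))
  have i2 := pairT_identity (n := n) x
  rw [Equiv.sum_comp τ x, Equiv.sum_comp τ (fun i => x i * x i)] at i1
  linarith

lemma pairSum'_eq_pairT (x : Fin n → ℝ) : pairSum' n x = pairT n x := by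
  unfold pairSum' pairT
  have h1 : ∀ i : Fin n, ∑ j ∈ Finset.Ioi i, x i * x j
      = ∑ j : Fin n, if i < j then x i * x j else 0 := by
    intro i
    rw [show Finset.Ioi i = Finset.univ.filter (fun j => i < j) by ext j; simp,
      Finset.sum_filter]
  rw [Finset.sum_congr rfl fun i _ => h1 i, Finset.sum_comm]

lemma sum_x_shiftVec (x : Fin n → ℝ) (s : ℝ) (τ : Equiv.Perm (Fin n)) :
    ∑ i : Fin n, x i * shiftVec n x s τ i = s * pairSum' n x := by
  rw [← Equiv.sum_comp τ (fun i => x i * shiftVec n x s τ i)]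
  have : ∀ m : Fin n, x (τ m) * shiftVec n x s τ (τ m)
      = s * ∑ k : Fin n, if k < m then (fun k => x (τ k)) k * (fun k => x (τ k)) m else 0 := by
    intro m
    rw [shiftVec_apply]
    simp only [Finset.mul_sum]
    refine Finset.sum_congr rfl fun k _ => ?_
    by_cases h : (k : ℕ) < (m : ℕ)
    · rw [if_pos h, if_pos (show k < m from h)]; ring
    · rw [if_neg h, if_neg (show ¬ k < m from h)]; ring
  rw [Finset.sum_congr rfl fun m _ => this m, ← Finset.mul_sum]
  rw [show (∑ m : Fin n, ∑ k : Fin n, if k < m then (fun k => x (τ k)) k * (fun k => x (τ k)) m else 0) = pairT n (fun k => x (τ k)) from rfl]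
  rw [pairT_comp_perm, pairSum'_eq_pairT]


section MeasureFacts

instance (r : ℝ) : NullSingletonClass (expMeasure r) := by
  constructor
  intro a
  rw [show expMeasure r = volume.withDensity (exponentialPDF r) from rfl,
    withDensity_apply _ (measurableSet_singleton a), lintegral_singleton]
  simp

lemma expMeasure_apply (r : ℝ) {s : Set ℝ} (hs : MeasurableSet s) :
    expMeasure r s = ∫⁻ t in s, exponentialPDF r t :=
  withDensity_apply _ hs

lemma expMeasure_Iic {r : ℝ} (hr : 0 < r) (t : ℝ) :
    expMeasure r (Set.Iic t) = ENNReal.ofReal (if 0 ≤ t then 1 - Real.exp (-(r * t)) else 0) := by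
  rw [expMeasure_apply r measurableSet_Iic, lintegral_exponentialPDF_eq_antiDeriv hr]

lemma expMeasure_Iic_zero {r : ℝ} (hr : 0 < r) : expMeasure r (Set.Iic 0) = 0 := by
  rw [expMeasure_Iic hr 0]
  simp

lemma measurable_exponentialPDF (r : ℝ) : Measurable (exponentialPDF r) :=
  (measurable_exponentialPDFReal r).ennreal_ofReal

variable {n : ℕ}

lemma lmarginal_prod (μ : Fin n → Measure ℝ) [∀ i, SigmaFinite (μ i)]
    (f : Fin n → ℝ → ℝ≥0∞) (hf : ∀ i, Measurable (f i)) (s : Finset (Fin n)) :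
    (∫⋯∫⁻_s, (fun u => ∏ i : Fin n, f i (u i)) ∂μ) =
      fun u => (∏ i ∈ s, ∫⁻ t, f i t ∂μ i) * ∏ i ∈ sᶜ, f i (u i) := by
  have hF : Measurable (fun u : Fin n → ℝ => ∏ i : Fin n, f i (u i)) :=
    Finset.measurable_prod Finset.univ fun i _ => (hf i).comp (measurable_pi_apply i)
  induction s using Finset.induction with
  | empty => ext u; simp [MeasureTheory.lmarginal_empty]
  | @insert i s hi ih =>
    ext u
    rw [MeasureTheory.lmarginal_insert _ hF hi, Finset.compl_insert]
    have step : ∀ t : ℝ, (∫⋯∫⁻_s, (fun u => ∏ i : Fin n, f i (u i)) ∂μ) (Function.update u i t)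
        = ((∏ j ∈ s, ∫⁻ t', f j t' ∂μ j) * ∏ j ∈ sᶜ.erase i, f j (u j)) * f i t := by
      intro t
      rw [ih]
      dsimp only
      have hi' : i ∈ sᶜ := Finset.mem_compl.mpr hi
      rw [← Finset.prod_erase_mul _ _ hi']
      have : ∀ j ∈ sᶜ.erase i, f j (Function.update u i t j) = f j (u j) := by
        intro j hj
        rw [Function.update_of_ne (Finset.ne_of_mem_erase hj)]
      rw [Finset.prod_congr rfl this, Function.update_self]
      ring
    simp_rw [step]
    rw [lintegral_const_mul _ (hf i), Finset.prod_insert hi]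
    ring

lemma lintegral_pi_prod (μ : Fin n → Measure ℝ) [∀ i, SigmaFinite (μ i)]
    (f : Fin n → ℝ → ℝ≥0∞) (hf : ∀ i, Measurable (f i)) :
    ∫⁻ u, ∏ i : Fin n, f i (u i) ∂Measure.pi μ = ∏ i : Fin n, ∫⁻ t, f i t ∂μ i := by
  rw [MeasureTheory.lintegral_eq_lmarginal_univ (fun _ => (0 : ℝ)),
    lmarginal_prod μ f hf Finset.univ]
  simp

lemma pi_expMeasure_eq (x : Fin n → ℝ) (hx : ∀ i, 0 < x i) :
    Measure.pi (fun i => expMeasure (x i)) =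
      (volume : Measure (Fin n → ℝ)).withDensity
        (fun u => ∏ i : Fin n, exponentialPDF (x i) (u i)) := by
  haveI : ∀ i, IsProbabilityMeasure (expMeasure (x i)) :=
    fun i => isProbabilityMeasure_expMeasure (hx i)
  refine Measure.pi_eq fun sets hsets => ?_
  rw [withDensity_apply _ (MeasurableSet.univ_pi hsets),
    ← lintegral_indicator (MeasurableSet.univ_pi hsets)]
  have hind : ∀ u : Fin n → ℝ,
      (Set.univ.pi sets).indicator (fun u => ∏ i : Fin n, exponentialPDF (x i) (u i)) u
        = ∏ i : Fin n, (sets i).indicator (exponentialPDF (x i)) (u i) := by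
    intro u
    by_cases hu : u ∈ Set.univ.pi sets
    · rw [Set.indicator_of_mem hu]
      refine Finset.prod_congr rfl fun i _ => ?_
      rw [Set.indicator_of_mem (hu i (Set.mem_univ i))]
    · rw [Set.indicator_of_notMem hu]
      have hex : ∃ i, u i ∉ sets i := by simpa [Set.mem_pi] using hu
      obtain ⟨i, hiu⟩ := hex
      exact (Finset.prod_eq_zero (Finset.mem_univ i)
        (by rw [Set.indicator_of_notMem hiu])).symm
  rw [lintegral_congr hind, volume_pi,
    lintegral_pi_prod _ _ (fun i => (measurable_exponentialPDF (x i)).indicator (hsets i))]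
  refine (Finset.prod_congr rfl fun i _ => ?_)
  rw [lintegral_indicator (hsets i), expMeasure_apply _ (hsets i)]

end MeasureFacts


section Sets

variable {x : Fin n → ℝ} {s : ℝ} {v : Fin n → ℝ} {τ : Equiv.Perm (Fin n)}

lemma measurableSet_gapSet : MeasurableSet (gapSet n x s τ) := by
  have : gapSet n x s τ = ⋂ (j : ℕ), ⋂ (hj : j + 1 < n),
      {y : Fin n → ℝ | y (τ ⟨j, Nat.lt_of_succ_lt hj⟩)
        + s * x (τ ⟨j, Nat.lt_of_succ_lt hj⟩) < y (τ ⟨j + 1, hj⟩)} := by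
    ext y
    simp only [gapSet, Set.mem_iInter, Set.mem_setOf_eq, gt_iff_lt]
  rw [this]
  exact MeasurableSet.iInter fun j => MeasurableSet.iInter fun hj =>
    measurableSet_lt ((measurable_pi_apply _).add_const _) (measurable_pi_apply _)

lemma measurable_resVal (i : Fin n) : Measurable (fun y => resVal n x s y i) := by
  refine (measurable_pi_apply i).sub (Measurable.const_mul ?_ s)
  refine Finset.measurable_sum _ fun j _ => Measurable.const_mul ?_ (x j)
  exact Measurable.ite (measurableSet_lt (measurable_pi_apply j) (measurable_pi_apply i))
    measurable_const measurable_const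

lemma measurableSet_resSet : MeasurableSet (resSet n x s v) := by
  have : resSet n x s v = ⋂ i : Fin n, {y | resVal n x s y i ≤ v i} := by
    ext y; simp [resSet, Set.mem_iInter]
  rw [this]
  exact MeasurableSet.iInter fun i => measurableSet_le (measurable_resVal i) measurable_const

lemma measurableSet_ASet : MeasurableSet (ASet n x s v τ) :=
  measurableSet_gapSet.inter measurableSet_resSet

lemma measurableSet_BSet : MeasurableSet (BSet n v τ) := by
  have h1 : {u : Fin n → ℝ | StrictMono (u ∘ τ)}
      = ⋂ (a : Fin n), ⋂ (b : Fin n), ⋂ (_ : a < b), {u : Fin n → ℝ | u (τ a) < u (τ b)} := by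
    ext u
    simp only [Set.mem_iInter, Set.mem_setOf_eq]
    exact ⟨fun h a b hab => h hab, fun h a b hab => h a b hab⟩
  refine MeasurableSet.inter ?_ ?_
  · rw [h1]
    exact MeasurableSet.iInter fun a => MeasurableSet.iInter fun b =>
      MeasurableSet.iInter fun _ => measurableSet_lt (measurable_pi_apply _) (measurable_pi_apply _)
  · have : {u : Fin n → ℝ | ∀ i, u i ≤ v i} = ⋂ i : Fin n, {u : Fin n → ℝ | u i ≤ v i} := by
      ext u; simp
    rw [this]
    exact MeasurableSet.iInter fun i =>
      measurableSet_le (measurable_pi_apply _) measurable_const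

/-- Key combinatorial equivalence: the shifted vector lies in `ASet` iff the original
vector lies in `BSet`. -/
lemma shift_mem_ASet_iff (hx : ∀ i, 0 < x i) (hs : 0 ≤ s) (u : Fin n → ℝ) :
    (fun i => u i + shiftVec n x s τ i) ∈ ASet n x s v τ ↔ u ∈ BSet n v τ := by
  have hgap : (fun i => u i + shiftVec n x s τ i) ∈ gapSet n x s τ ↔ StrictMono (u ∘ τ) := by
    rw [strictMono_iff_consec (u ∘ τ)]
    constructor
    · intro h j hj
      have h2 := h j hj
      dsimp only at h2
      rw [shiftVec_succ x s τ hj] at h2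
      simp only [Function.comp_apply]
      linarith [h2]
    · intro h j hj
      have h2 := h j hj
      simp only [Function.comp_apply] at h2
      show _ > _
      dsimp only
      rw [shiftVec_succ x s τ hj]
      linarith [h2]
  constructor
  · rintro ⟨h1, h2⟩
    have hm : StrictMono (u ∘ τ) := hgap.mp h1
    refine ⟨hm, fun i => ?_⟩
    have hym := gapSet_strictMono hx hs h1
    have h3 := h2 i
    rwa [resVal_shift x s τ u hym i] at h3
  · rintro ⟨hm, hle⟩
    have h1 := hgap.mpr hm
    refine ⟨h1, fun i => ?_⟩
    show resVal _ _ _ _ _ ≤ _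
    rw [resVal_shift x s τ u (gapSet_strictMono hx hs h1) i]
    exact hle i

end Sets

section MainMeasure

open scoped ENNReal

variable {x : Fin n → ℝ} {s : ℝ} {v : Fin n → ℝ}

lemma measure_ASet (hn : 0 < n) (hx : ∀ i, 0 < x i) (hs : 0 ≤ s)
    (v : Fin n → ℝ) (τ : Equiv.Perm (Fin n)) :
    Measure.pi (fun i => expMeasure (x i)) (ASet n x s v τ)
      = ENNReal.ofReal (Real.exp (-(s * pairSum' n x)))
        * Measure.pi (fun i => expMeasure (x i)) (BSet n v τ) := by
  classical
  set c : Fin n → ℝ := shiftVec n x s τ with hcdef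
  set F : (Fin n → ℝ) → ℝ≥0∞ := fun u => ∏ i : Fin n, exponentialPDF (x i) (u i) with hFdef
  have hFmeas : Measurable F :=
    Finset.measurable_prod _ fun i _ => (measurable_exponentialPDF _).comp (measurable_pi_apply i)
  have hA : MeasurableSet (ASet n x s v τ) := measurableSet_ASet
  have hB : MeasurableSet (BSet n v τ) := measurableSet_BSet
  have htrans : ∫⁻ u, ((ASet n x s v τ).indicator F) (u + c) ∂(volume : Measure (Fin n → ℝ))
      = ∫⁻ u, ((ASet n x s v τ).indicator F) u ∂(volume : Measure (Fin n → ℝ)) :=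
    (measurePreserving_add_right (volume : Measure (Fin n → ℝ)) c).lintegral_comp
      (hFmeas.indicator hA)
  have hae : ∀ᵐ u : Fin n → ℝ ∂(volume : Measure (Fin n → ℝ)), ∀ i : Fin n, u i ≠ (0:ℝ) := by
    rw [MeasureTheory.ae_all_iff]
    intro i
    rw [volume_pi]
    exact Measure.ae_eval_ne _ i 0
  have hptwise : ∀ u : Fin n → ℝ, (∀ i : Fin n, u i ≠ (0:ℝ)) →
      ((ASet n x s v τ).indicator F) (u + c)
        = ENNReal.ofReal (Real.exp (-(s * pairSum' n x))) * ((BSet n v τ).indicator F) u := by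
    intro u hu
    have hmem : (u + c) ∈ ASet n x s v τ ↔ u ∈ BSet n v τ := by
      have : u + c = fun i => u i + shiftVec n x s τ i := rfl
      rw [this]
      exact shift_mem_ASet_iff hx hs u
    by_cases hu' : u ∈ BSet n v τ
    · rw [Set.indicator_of_mem (hmem.mpr hu'), Set.indicator_of_mem hu']
      obtain ⟨hm, hle⟩ := hu'
      set i0 : Fin n := τ ⟨0, hn⟩ with hi0
      rcases lt_trichotomy (u i0) 0 with h0 | h0 | h0
      · have hz1 : F u = 0 := Finset.prod_eq_zero (Finset.mem_univ i0)
          (exponentialPDF_of_neg h0)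
        have hc0 : c i0 = 0 := shiftVec_zero x s τ hn
        have hz2 : F (u + c) = 0 := by
          refine Finset.prod_eq_zero (Finset.mem_univ i0) ?_
          have : (u + c) i0 = u i0 := by
            show u i0 + c i0 = u i0
            rw [hc0, add_zero]
          rw [this]
          exact exponentialPDF_of_neg h0
        rw [hz1, hz2, mul_zero]
      · exact absurd h0 (hu i0)
      · have hpos : ∀ i, 0 < u i := by
          intro i
          have h0le : (⟨0, hn⟩ : Fin n) ≤ τ.symm i := by
            rw [Fin.le_def]
            exact Nat.zero_le _
          have h2 := hm.monotone h0le
          simp only [Function.comp_apply, Equiv.apply_symm_apply] at h2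
          exact lt_of_lt_of_le h0 h2
        calc F (u + c)
            = ∏ i : Fin n, (ENNReal.ofReal (Real.exp (-(x i * c i)))
              * ENNReal.ofReal (x i * Real.exp (-(x i * u i)))) := by
              refine Finset.prod_congr rfl fun i _ => ?_
              have hci := shiftVec_nonneg x hx hs τ i
              have h1 : (0:ℝ) ≤ u i + c i := by linarith [hpos i]
              have h2 : (u + c) i = u i + c i := rfl
              show exponentialPDF (x i) ((u + c) i) = _
              rw [h2, exponentialPDF_of_nonneg h1, ← ENNReal.ofReal_mul (exp_nonneg _)]
              congr 1
              have h3 : -(x i * (u i + c i)) = -(x i * c i) + -(x i * u i) := by ring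
              rw [h3, Real.exp_add]
              ring
          _ = ENNReal.ofReal (Real.exp (-(s * pairSum' n x))) * F u := by
              rw [Finset.prod_mul_distrib]
              congr 1
              · rw [← ENNReal.ofReal_prod_of_nonneg (fun i _ => exp_nonneg _),
                  ← Real.exp_sum]
                congr 1
                rw [← sum_x_shiftVec x s τ, ← Finset.sum_neg_distrib]
              · exact Finset.prod_congr rfl fun i _ =>
                  (exponentialPDF_of_nonneg (hpos i).le).symm
    · rw [Set.indicator_of_notMem hu', Set.indicator_of_notMem (fun hmemA => hu' (hmem.mp hmemA)),
        mul_zero]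
  calc Measure.pi (fun i => expMeasure (x i)) (ASet n x s v τ)
      = ∫⁻ u in ASet n x s v τ, F u ∂(volume : Measure (Fin n → ℝ)) := by
        rw [pi_expMeasure_eq x hx, withDensity_apply _ hA]
    _ = ∫⁻ u, ((ASet n x s v τ).indicator F) u ∂(volume : Measure (Fin n → ℝ)) :=
        (lintegral_indicator hA F).symm
    _ = ∫⁻ u, ((ASet n x s v τ).indicator F) (u + c) ∂(volume : Measure (Fin n → ℝ)) :=
        htrans.symm
    _ = ∫⁻ u, ENNReal.ofReal (Real.exp (-(s * pairSum' n x)))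
          * ((BSet n v τ).indicator F) u ∂(volume : Measure (Fin n → ℝ)) := by
        refine lintegral_congr_ae ?_
        filter_upwards [hae] with u hu
        exact hptwise u hu
    _ = ENNReal.ofReal (Real.exp (-(s * pairSum' n x)))
          * ∫⁻ u, ((BSet n v τ).indicator F) u ∂(volume : Measure (Fin n → ℝ)) :=
        lintegral_const_mul _ (hFmeas.indicator hB)
    _ = ENNReal.ofReal (Real.exp (-(s * pairSum' n x)))
          * Measure.pi (fun i => expMeasure (x i)) (BSet n v τ) := by
        rw [lintegral_indicator hB, ← withDensity_apply _ hB, ← pi_expMeasure_eq x hx]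

end MainMeasure


section Final

variable {x : Fin n → ℝ} {s : ℝ} {v : Fin n → ℝ}

lemma pairwise_disjoint_ASet (hx : ∀ i, 0 < x i) (hs : 0 ≤ s) :
    Pairwise (Function.onFun Disjoint (ASet n x s v)) := by
  intro τ σ hne
  rw [Function.onFun, Set.disjoint_left]
  intro y hyτ hyσ
  exact hne (perm_eq_of_strictMono (gapSet_strictMono hx hs hyτ.1)
    (gapSet_strictMono hx hs hyσ.1))

lemma pairwise_disjoint_BSet :
    Pairwise (Function.onFun Disjoint (BSet n (v := v))) := by
  intro τ σ hne
  rw [Function.onFun, Set.disjoint_left]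
  intro y hyτ hyσ
  exact hne (perm_eq_of_strictMono hyτ.1 hyσ.1)

lemma measure_box (hx : ∀ i, 0 < x i) (hv : ∀ i, 0 < v i) :
    Measure.pi (fun i => expMeasure (x i)) {u : Fin n → ℝ | ∀ i, u i ≤ v i}
      = ∏ i : Fin n, ENNReal.ofReal (1 - Real.exp (-(x i * v i))) := by
  haveI : ∀ i, IsProbabilityMeasure (expMeasure (x i)) :=
    fun i => isProbabilityMeasure_expMeasure (hx i)
  have hbox : {u : Fin n → ℝ | ∀ i, u i ≤ v i} = Set.univ.pi (fun i => Set.Iic (v i)) := by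
    ext u; simp only [Set.mem_pi, Set.mem_univ, Set.mem_Iic, Set.mem_setOf_eq, forall_const]
  rw [hbox, Measure.pi_pi]
  refine Finset.prod_congr rfl fun i _ => ?_
  rw [expMeasure_Iic (hx i) (v i), if_pos (hv i).le]

end Final

end ResidualsAux



open ResidualsAux in
/-- for `n ≥ 2`, `s ≥ 0` and positive `v_1, …, v_n`,
`P((⋃_τ E_τ(s)) ∩ {R_i(s) ≤ v_i ∀i}) = e^{-s Σ_{i<j} x_i x_j} · ∏_{i=1}^n (1 − e^{-x_i v_i})`:
conditionally on `{S > s} = ⋃_τ E_τ(s)`, the residuals `R_1(s), …, R_n(s)` are independent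
exponentials with respective rates `x_1, …, x_n`. -/
theorem residuals_on_union_gapEvents (n : ℕ) (hn : 2 ≤ n) (x : Fin n → ℝ)
    (hx : ∀ i, 0 < x i)
    {Ω : Type*} [MeasurableSpace Ω] (P : Measure Ω) [IsProbabilityMeasure P]
    (ξ : Fin n → Ω → ℝ) (hmeas : ∀ i, Measurable (ξ i))
    (hindep : iIndepFun ξ P)
    (hdist : ∀ i, P.map (ξ i) = expMeasure (x i))
    (s : ℝ) (hs : 0 ≤ s) (v : Fin n → ℝ) (hv : ∀ i, 0 < v i) :
    P ((⋃ τ : Equiv.Perm (Fin n), gapEvent n x ξ s τ) ∩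
        ⋂ i : Fin n, {ω | residualVar n x ξ s i ω ≤ v i}) =
      ENNReal.ofReal (Real.exp (-(s * pairSum n x)) *
        ∏ i : Fin n, (1 - Real.exp (-(x i * v i)))) := by

  classical
  haveI : ∀ i : Fin n, IsProbabilityMeasure (expMeasure (x i)) :=
    fun i => isProbabilityMeasure_expMeasure (hx i)
  have hn0 : 0 < n := by omega
  set μ : Measure (Fin n → ℝ) := Measure.pi (fun i => expMeasure (x i)) with hμdef
  set ξv : Ω → (Fin n → ℝ) := fun ω i => ξ i ω with hξvdef
  have hξvmeas : Measurable ξv := measurable_pi_lambda _ hmeas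
  have hmap : P.map ξv = μ := by
    rw [hμdef]
    refine (Measure.pi_eq fun sets hsets => ?_).symm
    rw [Measure.map_apply hξvmeas (MeasurableSet.univ_pi hsets)]
    have hpre : ξv ⁻¹' Set.univ.pi sets = ⋂ i ∈ Finset.univ, ξ i ⁻¹' sets i := by
      ext ω
      simp [Set.mem_pi, hξvdef]
    rw [hpre, hindep.measure_inter_preimage_eq_mul Finset.univ (fun i _ => hsets i)]
    exact Finset.prod_congr rfl fun i _ => by
      rw [← hdist i, Measure.map_apply (hmeas i) (hsets i)]
  -- rewrite the event as a preimage
  have hev : (⋃ τ : Equiv.Perm (Fin n), gapEvent n x ξ s τ) ∩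
        (⋂ i : Fin n, {ω | residualVar n x ξ s i ω ≤ v i})
      = ξv ⁻¹' (⋃ τ : Equiv.Perm (Fin n), ASet n x s v τ) := by
    rw [Set.preimage_iUnion, Set.iUnion_inter]
    refine Set.iUnion_congr fun τ => ?_
    have h1 : gapEvent n x ξ s τ = ξv ⁻¹' gapSet n x s τ := rfl
    have h2 : (⋂ i : Fin n, {ω | residualVar n x ξ s i ω ≤ v i})
        = ξv ⁻¹' resSet n x s v := by
      ext ω
      simp only [Set.mem_iInter, Set.mem_setOf_eq, Set.mem_preimage]
      rfl
    rw [h1, h2]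
    rfl
  have hAmeas : ∀ τ : Equiv.Perm (Fin n), MeasurableSet (ASet n x s v τ) :=
    fun τ => measurableSet_ASet
  have hBmeas : ∀ τ : Equiv.Perm (Fin n), MeasurableSet (BSet n v τ) :=
    fun τ => measurableSet_BSet
  rw [hev, ← Measure.map_apply hξvmeas (MeasurableSet.iUnion hAmeas), hmap,
    measure_iUnion (pairwise_disjoint_ASet hx hs) hAmeas, tsum_fintype,
    Finset.sum_congr rfl (fun τ _ => measure_ASet hn0 hx hs v τ), ← Finset.mul_sum]
  -- diagonal null sets
  have hdiag : ∀ i j : Fin n, i ≠ j → μ {u : Fin n → ℝ | u i = u j} = 0 := by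
    intro i j hij
    have hDmeas : MeasurableSet {u : Fin n → ℝ | u i = u j} :=
      measurableSet_eq_fun (measurable_pi_apply i) (measurable_pi_apply j)
    rw [← hmap, Measure.map_apply hξvmeas hDmeas]
    have hpair : P.map (fun ω => (ξ i ω, ξ j ω))
        = (expMeasure (x i)).prod (expMeasure (x j)) := by
      rw [← hdist i, ← hdist j]
      exact (indepFun_iff_map_prod_eq_prod_map_map (hmeas i).aemeasurable
        (hmeas j).aemeasurable).mp (hindep.indepFun hij)
    have hdm : MeasurableSet {p : ℝ × ℝ | p.1 = p.2} :=
      measurableSet_eq_fun measurable_fst measurable_snd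
    have hpre : ξv ⁻¹' {u : Fin n → ℝ | u i = u j}
        = (fun ω => (ξ i ω, ξ j ω)) ⁻¹' {p : ℝ × ℝ | p.1 = p.2} := rfl
    rw [hpre, ← Measure.map_apply ((hmeas i).prodMk (hmeas j)) hdm, hpair,
      Measure.prod_apply hdm]
    have hfiber : ∀ a : ℝ, (Prod.mk a ⁻¹' {p : ℝ × ℝ | p.1 = p.2}) = {a} := by
      intro a; ext b; simp [eq_comm]
    simp only [hfiber, measure_singleton]
    simp
  -- the union of the BSets fills the box up to a null set
  have hsubU : (⋃ τ : Equiv.Perm (Fin n), BSet n v τ) ⊆ {u : Fin n → ℝ | ∀ i, u i ≤ v i} :=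
    Set.iUnion_subset fun τ u hu => hu.2
  have hbadnull : μ ({u : Fin n → ℝ | ∀ i, u i ≤ v i}
      \ ⋃ τ : Equiv.Perm (Fin n), BSet n v τ) = 0 := by
    have hsub : {u : Fin n → ℝ | ∀ i, u i ≤ v i} \ (⋃ τ : Equiv.Perm (Fin n), BSet n v τ)
        ⊆ (⋃ i : Fin n, {u : Fin n → ℝ | u i ≤ 0})
            ∪ ⋃ (p : Fin n × Fin n), ⋃ (_ : p.1 ≠ p.2), {u : Fin n → ℝ | u p.1 = u p.2} := by
      intro u hu
      by_contra hmemb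
      simp only [Set.mem_union, Set.mem_iUnion, not_or, not_exists, Set.mem_setOf_eq] at hmemb
      obtain ⟨h1, h2⟩ := hmemb
      have hinj : Function.Injective u := by
        intro a b hab
        by_contra hne
        exact h2 (a, b) hne hab
      obtain ⟨τ, hτ⟩ := exists_sort_perm hinj
      exact hu.2 (Set.mem_iUnion.mpr ⟨τ, hτ, hu.1⟩)
    refine measure_mono_null hsub (measure_union_null ?_ ?_)
    · refine measure_iUnion_null fun i => ?_
      have : {u : Fin n → ℝ | u i ≤ 0} = Function.eval i ⁻¹' Set.Iic 0 := rfl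
      rw [this]
      exact Measure.pi_eval_preimage_null _ (expMeasure_Iic_zero (hx i))
    · exact measure_iUnion_null fun p => measure_iUnion_null fun hp => hdiag p.1 p.2 hp
  have hBun : ∑ τ : Equiv.Perm (Fin n), μ (BSet n v τ)
      = μ {u : Fin n → ℝ | ∀ i, u i ≤ v i} := by
    rw [← tsum_fintype (L := .unconditional _), ← measure_iUnion pairwise_disjoint_BSet hBmeas]
    refine le_antisymm (measure_mono hsubU) ?_
    calc μ {u : Fin n → ℝ | ∀ i, u i ≤ v i}
        ≤ μ ((⋃ τ : Equiv.Perm (Fin n), BSet n v τ)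
            ∪ ({u : Fin n → ℝ | ∀ i, u i ≤ v i} \ ⋃ τ : Equiv.Perm (Fin n), BSet n v τ)) := by
          refine measure_mono fun u hu => ?_
          by_cases h : u ∈ ⋃ τ : Equiv.Perm (Fin n), BSet n v τ
          · exact Or.inl h
          · exact Or.inr ⟨hu, h⟩
      _ ≤ μ (⋃ τ : Equiv.Perm (Fin n), BSet n v τ)
            + μ ({u : Fin n → ℝ | ∀ i, u i ≤ v i} \ ⋃ τ : Equiv.Perm (Fin n), BSet n v τ) :=
          measure_union_le _ _
      _ = μ (⋃ τ : Equiv.Perm (Fin n), BSet n v τ) := by rw [hbadnull, add_zero]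
  rw [hBun, measure_box hx hv]
  have hps : pairSum' n x = pairSum n x := rfl
  rw [hps, ENNReal.ofReal_mul (Real.exp_nonneg _),
    ENNReal.ofReal_prod_of_nonneg (fun i _ => ?_)]
  rw [sub_nonneg]
  exact Real.exp_le_one_iff.mpr (by nlinarith [hx i, hv i, mul_pos (hx i) (hv i)])
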